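/- For all complex numbers a, b, v with |a| < 1, |b| < 1, |v| < 1, the Möbius gyration preserves absolute value: |(−(a ⊕_M b)) ⊕_M (a ⊕_M (b ⊕_M v))| = |v|, where ⊕_M denotes Möbius addition (the left-hand side is gyr[a,b]v by the gyrator identity). -/

import Mathlib

/-- Möbius addition on the complex unit disc. -/
noncomputable def mAdd (x y : ℂ) : ℂ := (x + y) / (1 + (starRingEnd ℂ) x * y)

lemma hne' {x y : ℂ} (hx : ‖x‖ < 1) (hy : ‖y‖ < 1) :
    1 + (starRingEnd ℂ) x * y ≠ 0 := by
  intro h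
  have habs : ‖(starRingEnd ℂ) x * y‖ < 1 := by
    rw [norm_mul, Complex.norm_conj]
    nlinarith [norm_nonneg x, norm_nonneg y]
  have hxy : (starRingEnd ℂ) x * y = -1 := by linear_combination h
  rw [hxy] at habs; simp at habs

lemma mclosed {x y : ℂ} (hx : ‖x‖ < 1) (hy : ‖y‖ < 1) :
    ‖mAdd x y‖ < 1 := by
  unfold mAdd
  rw [norm_div, div_lt_one (norm_pos_iff.mpr (hne' hx hy))]
  apply lt_of_pow_lt_pow_left₀ 2 (norm_nonneg _)
  rw [Complex.sq_norm, Complex.sq_norm]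
  have hx2 : Complex.normSq x < 1 := by
    have := Complex.sq_norm x; nlinarith [norm_nonneg x]
  have hy2 : Complex.normSq y < 1 := by
    have := Complex.sq_norm y; nlinarith [norm_nonneg y]
  simp [Complex.normSq_apply] at *
  ring_nf
  nlinarith [hx2, hy2, sq_nonneg (x.re*y.re - x.im*y.im), sq_nonneg (x.re*y.im + x.im*y.re)]

/-- Möbius gyrations preserve the absolute value:
|gyr[a,b]v| = |⊖(a⊕b) ⊕ (a ⊕ (b ⊕ v))| = |v|. -/
theorem stmt_17 (a b v : ℂ) (ha : ‖a‖ < 1) (hb : ‖b‖ < 1)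
    (hv : ‖v‖ < 1) :
    ‖mAdd (-(mAdd a b)) (mAdd a (mAdd b v))‖ = ‖v‖ := by
  have h0 : 1 + (starRingEnd ℂ) a * b ≠ 0 := hne' ha hb
  have h0' : 1 + a * (starRingEnd ℂ) b ≠ 0 := by
    intro h; exact hne' hb ha (by linear_combination h)
  have h1 : 1 + (starRingEnd ℂ) b * v ≠ 0 := hne' hb hv
  have hbv := mclosed hb hv
  have h2 : 1 + (starRingEnd ℂ) a * ((b + v) / (1 + (starRingEnd ℂ) b * v)) ≠ 0 :=
    hne' ha hbv
  have hX := mclosed ha hbv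
  have hab := mclosed ha hb
  have h3 : 1 + (starRingEnd ℂ) (-(mAdd a b)) * mAdd a (mAdd b v) ≠ 0 :=
    hne' (by simpa using hab) hX
  have hDne : (1 + (starRingEnd ℂ) b * v + (starRingEnd ℂ) a * b + (starRingEnd ℂ) a * v) ≠ 0 := by
    have : (1 + (starRingEnd ℂ) b * v + (starRingEnd ℂ) a * b + (starRingEnd ℂ) a * v)
        = (1 + (starRingEnd ℂ) b * v) * (1 + (starRingEnd ℂ) a * ((b + v) / (1 + (starRingEnd ℂ) b * v))) := by
      field_simp; ring
    rw [this]
    exact mul_ne_zero h1 h2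
  have eX : mAdd a (mAdd b v)
      = (a + a * (starRingEnd ℂ) b * v + b + v)
        / (1 + (starRingEnd ℂ) b * v + (starRingEnd ℂ) a * b + (starRingEnd ℂ) a * v) := by
    rw [mAdd, mAdd, div_eq_div_iff h2 hDne]
    have h1' : 1 + v * (starRingEnd ℂ) b ≠ 0 := by rwa [mul_comm]
    field_simp
    ring
  have eC : mAdd a b = (a + b) / (1 + (starRingEnd ℂ) a * b) := rfl
  rw [eX, eC] at h3
  simp only [map_neg, map_div₀, map_add, map_mul, map_one, Complex.conj_conj] at h3
  have key : mAdd (-(mAdd a b)) (mAdd a (mAdd b v))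
      = ((1 + a * (starRingEnd ℂ) b) / (1 + (starRingEnd ℂ) a * b)) * v := by
    rw [mAdd, eX, eC]
    simp only [map_neg, map_div₀, map_add, map_mul, map_one, Complex.conj_conj]
    rw [div_eq_iff h3]
    set D := 1 + (starRingEnd ℂ) b * v + (starRingEnd ℂ) a * b + (starRingEnd ℂ) a * v with hD
    have h0'' : 1 + b * (starRingEnd ℂ) a ≠ 0 := by rwa [mul_comm]
    field_simp
    ring
  rw [key, norm_mul, norm_div]
  have habs : ‖1 + a * (starRingEnd ℂ) b‖ = ‖1 + (starRingEnd ℂ) a * b‖ := by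
    rw [← Complex.norm_conj (1 + (starRingEnd ℂ) a * b)]
    congr 1
    simp [mul_comm]
  rw [habs, div_self (norm_ne_zero_iff.mpr h0), one_mul]
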